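/- arXiv:2309.12567 — 2 statements merged into one kernel-verified Lean document; each statement's English description precedes it below -/
import Mathlib

section
/- Let 1 < p < ∞ and let f(z,σ) = g(|z|²/4, σ) for a C² function g : ℝ × ℝ^k → ℝ. Then at every point (z,σ) with z ≠ 0 and ∇g(ξ,σ) ≠ 0, where ξ = |z|²/4, the horizontal p-Laplacian is given by Δ_{H,p} f(z,σ) = ξ^{p/2} |∇g|^{p−2} [ g_{ξξ} + ((m+p−2)/(2ξ)) g_ξ + Δ_σ g + (p−2) Δ_∞ g / |∇g|² ], where all quantities involving g are evaluated at (ξ,σ), ∇g = (g_ξ, ∇_σ g), and Δ_∞ g = (1/2)⟨∇(|∇g|²), ∇g⟩. -/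
open scoped BigOperators
open Matrix

noncomputable section

variable {m k : ℕ}

/-- The ambient point space ℝ^m × ℝ^k. -/
abbrev Pt (m k : ℕ) := EuclideanSpace ℝ (Fin m) × EuclideanSpace ℝ (Fin k)

/-- H-type (Clifford) condition on the matrices J_ℓ : skew-symmetry and
    J_ℓ J_{ℓ'} + J_{ℓ'} J_ℓ = -2 δ_{ℓℓ'} Id. -/
def HType (J : Fin k → Matrix (Fin m) (Fin m) ℝ) : Prop :=
  (∀ ℓ, (J ℓ)ᵀ = -(J ℓ)) ∧
  ∀ ℓ ℓ', J ℓ * J ℓ' + J ℓ' * J ℓ =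
    (if ℓ = ℓ' then (-2 : ℝ) else 0) • (1 : Matrix (Fin m) (Fin m) ℝ)

/-- Horizontal derivative X_i f(z,σ) = ∂_{z_i} f + (1/2) Σ_ℓ (J_ℓ z)_i ∂_{σ_ℓ} f. -/
def XD (J : Fin k → Matrix (Fin m) (Fin m) ℝ) (f : Pt m k → ℝ) (i : Fin m) (x : Pt m k) : ℝ :=
  fderiv ℝ f x (EuclideanSpace.single i 1, 0)
    + (1/2) * ∑ ℓ : Fin k, (∑ j : Fin m, J ℓ i j * x.1 j) *
        fderiv ℝ f x (0, EuclideanSpace.single ℓ 1)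

/-- Squared length of the horizontal gradient. -/
def hGradSq (J : Fin k → Matrix (Fin m) (Fin m) ℝ) (f : Pt m k → ℝ) (x : Pt m k) : ℝ :=
  ∑ i : Fin m, (XD J f i x) ^ 2

/-- Length of the horizontal gradient. -/
def hGradNorm (J : Fin k → Matrix (Fin m) (Fin m) ℝ) (f : Pt m k → ℝ) (x : Pt m k) : ℝ :=
  Real.sqrt (hGradSq J f x)

/-- Horizontal Laplacian Δ_H f = Σ X_i(X_i f). -/
def hLap (J : Fin k → Matrix (Fin m) (Fin m) ℝ) (f : Pt m k → ℝ) (x : Pt m k) : ℝ :=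
  ∑ i : Fin m, XD J (XD J f i) i x

/-- Horizontal ∞-Laplacian Δ_{H,∞} f = (1/2) Σ X_i(|∇_H f|²) X_i f. -/
def hInfLap (J : Fin k → Matrix (Fin m) (Fin m) ℝ) (f : Pt m k → ℝ) (x : Pt m k) : ℝ :=
  (1/2) * ∑ i : Fin m, XD J (hGradSq J f) i x * XD J f i x

/-- Horizontal p-Laplacian Δ_{H,p} f = Σ X_i(|∇_H f|^{p-2} X_i f). -/
def hPLap (J : Fin k → Matrix (Fin m) (Fin m) ℝ) (p : ℝ) (f : Pt m k → ℝ) (x : Pt m k) : ℝ :=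
  ∑ i : Fin m, XD J (fun y => (hGradSq J f y) ^ ((p - 2) / 2) * XD J f i y) i x

/-- Korányi gauge N(z,σ) = (|z|⁴ + 16|σ|²)^{1/4}. -/
def gaugeN (x : Pt m k) : ℝ := (‖x.1‖ ^ 4 + 16 * ‖x.2‖ ^ 2) ^ ((1 : ℝ)/4)

/-- ∂_ξ g for g : ℝ × ℝ^k → ℝ. -/
def gXi (g : ℝ × EuclideanSpace ℝ (Fin k) → ℝ) (y : ℝ × EuclideanSpace ℝ (Fin k)) : ℝ :=
  fderiv ℝ g y (1, 0)

/-- ∂_{σ_ℓ} g for g : ℝ × ℝ^k → ℝ. -/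
def gS (g : ℝ × EuclideanSpace ℝ (Fin k) → ℝ) (ℓ : Fin k) (y : ℝ × EuclideanSpace ℝ (Fin k)) : ℝ :=
  fderiv ℝ g y (0, EuclideanSpace.single ℓ 1)

/-- |∇ g|² = g_ξ² + |∇_σ g|². -/
def gGradSq (g : ℝ × EuclideanSpace ℝ (Fin k) → ℝ) (y : ℝ × EuclideanSpace ℝ (Fin k)) : ℝ :=
  (gXi g y) ^ 2 + ∑ ℓ : Fin k, (gS g ℓ y) ^ 2

/-- g_{ξξ}. -/
def gXiXi (g : ℝ × EuclideanSpace ℝ (Fin k) → ℝ) (y : ℝ × EuclideanSpace ℝ (Fin k)) : ℝ :=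
  fderiv ℝ (gXi g) y (1, 0)

/-- Δ_σ g. -/
def gLapS (g : ℝ × EuclideanSpace ℝ (Fin k) → ℝ) (y : ℝ × EuclideanSpace ℝ (Fin k)) : ℝ :=
  ∑ ℓ : Fin k, fderiv ℝ (gS g ℓ) y (0, EuclideanSpace.single ℓ 1)

/-- Euclidean ∞-Laplacian Δ_∞ g = (1/2)⟨∇(|∇g|²), ∇g⟩ on ℝ × ℝ^k. -/
def gInf (g : ℝ × EuclideanSpace ℝ (Fin k) → ℝ) (y : ℝ × EuclideanSpace ℝ (Fin k)) : ℝ :=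
  (1/2) * (fderiv ℝ (gGradSq g) y (1, 0) * gXi g y
    + ∑ ℓ : Fin k, fderiv ℝ (gGradSq g) y (0, EuclideanSpace.single ℓ 1) * gS g ℓ y)




lemma normsq_eq (z : EuclideanSpace ℝ (Fin m)) : ‖z‖^2 = ∑ j, z j ^ 2 := by
  rw [EuclideanSpace.norm_eq, Real.sq_sqrt (by positivity)]
  simp [sq_abs]

lemma zJz {J : Matrix (Fin m) (Fin m) ℝ} (h : Jᵀ = -J) (z : EuclideanSpace ℝ (Fin m)) :
    ∑ i, z i * (∑ j, J i j * z j) = 0 := by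
  have hskew : ∀ i j, J j i = - J i j := by
    intro i j
    have := congrFun (congrFun h i) j
    simpa [Matrix.transpose_apply, Matrix.neg_apply] using this
  have h1 : ∑ i, z i * (∑ j, J i j * z j) = ∑ i, ∑ j, z i * (J i j * z j) := by
    simp [Finset.mul_sum]
  have h2 : ∑ i : Fin m, ∑ j : Fin m, z i * (J i j * z j)
      = ∑ i : Fin m, ∑ j : Fin m, z j * (J j i * z i) := Finset.sum_comm
  have h3 : ∑ i : Fin m, ∑ j : Fin m, z j * (J j i * z i)
      = -∑ i : Fin m, ∑ j : Fin m, z i * (J i j * z j) := by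
    rw [← Finset.sum_neg_distrib]
    refine Finset.sum_congr rfl fun i _ => ?_
    rw [← Finset.sum_neg_distrib]
    refine Finset.sum_congr rfl fun j _ => ?_
    rw [hskew i j]; ring
  have := h2.trans h3
  rw [h1]; linarith

lemma JJsum {J : Fin k → Matrix (Fin m) (Fin m) ℝ}
    (hskew : ∀ ℓ, (J ℓ)ᵀ = -(J ℓ))
    (hcliff : ∀ ℓ ℓ', J ℓ * J ℓ' + J ℓ' * J ℓ =
      (if ℓ = ℓ' then (-2 : ℝ) else 0) • (1 : Matrix (Fin m) (Fin m) ℝ))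
    (z : EuclideanSpace ℝ (Fin m)) (ℓ ℓ' : Fin k) :
    ∑ i, (∑ j, J ℓ i j * z j) * (∑ j, J ℓ' i j * z j)
      = (if ℓ = ℓ' then (1:ℝ) else 0) * ∑ j, z j ^ 2 := by
  have hsk : ∀ ℓ i j, J ℓ j i = - J ℓ i j := by
    intro ℓ i j
    have := congrFun (congrFun (hskew ℓ) i) j
    simpa [Matrix.transpose_apply, Matrix.neg_apply] using this
  -- entrywise Clifford identity
  have hM : ∀ j r : Fin m, (∑ i, J ℓ i j * J ℓ' i r) + (∑ i, J ℓ' i j * J ℓ i r)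
      = if ℓ = ℓ' then (2:ℝ) * (if j = r then 1 else 0) else 0 := by
    intro j r
    have h1 := congrFun (congrFun (hcliff ℓ ℓ') j) r
    simp only [Matrix.add_apply, Matrix.mul_apply, Matrix.smul_apply, Matrix.one_apply,
      smul_eq_mul] at h1
    have e1 : ∑ i, J ℓ i j * J ℓ' i r = - ∑ i, J ℓ j i * J ℓ' i r := by
      rw [← Finset.sum_neg_distrib]
      exact Finset.sum_congr rfl fun i _ => by rw [hsk ℓ i j]; ring
    have e2 : ∑ i, J ℓ' i j * J ℓ i r = - ∑ i, J ℓ' j i * J ℓ i r := by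
      rw [← Finset.sum_neg_distrib]
      exact Finset.sum_congr rfl fun i _ => by rw [hsk ℓ' i j]; ring
    rw [e1, e2]
    by_cases h : ℓ = ℓ' <;> by_cases h2 : j = r <;> simp [h, h2] at h1 ⊢ <;> linarith
  -- expand the sum
  have expand : ∀ (A B : Fin k), ∑ i, (∑ j, J A i j * z j) * (∑ j, J B i j * z j)
      = ∑ j, ∑ r, (z j * z r) * ∑ i, J A i j * J B i r := by
    intro A B
    have : ∀ i : Fin m, (∑ j, J A i j * z j) * (∑ j, J B i j * z j)
        = ∑ j, ∑ r, (J A i j * z j) * (J B i r * z r) := fun i => Finset.sum_mul_sum _ _ _ _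
    rw [Finset.sum_congr rfl fun i _ => this i]
    rw [Finset.sum_comm]
    refine Finset.sum_congr rfl fun j _ => ?_
    rw [Finset.sum_comm]
    refine Finset.sum_congr rfl fun r _ => ?_
    rw [Finset.mul_sum]
    exact Finset.sum_congr rfl fun i _ => by ring
  have hsymm : ∑ i, (∑ j, J ℓ i j * z j) * (∑ j, J ℓ' i j * z j)
      = ∑ i, (∑ j, J ℓ' i j * z j) * (∑ j, J ℓ i j * z j) :=
    Finset.sum_congr rfl fun i _ => mul_comm _ _
  have h2 : (2:ℝ) * ∑ i, (∑ j, J ℓ i j * z j) * (∑ j, J ℓ' i j * z j)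
      = ∑ j, ∑ r, (z j * z r) * (if ℓ = ℓ' then (2:ℝ) * (if j = r then 1 else 0) else 0) := by
    rw [two_mul]
    nth_rewrite 2 [hsymm]
    rw [expand ℓ ℓ', expand ℓ' ℓ, ← Finset.sum_add_distrib]
    refine Finset.sum_congr rfl fun j _ => ?_
    rw [← Finset.sum_add_distrib]
    refine Finset.sum_congr rfl fun r _ => ?_
    rw [← mul_add, hM j r]
  have h3 : ∑ j : Fin m, ∑ r : Fin m, (z j * z r) * (if ℓ = ℓ' then (2:ℝ) * (if j = r then 1 else 0) else 0)
      = (if ℓ = ℓ' then (2:ℝ) else 0) * ∑ j, z j ^ 2 := by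
    by_cases h : ℓ = ℓ'
    · simp only [h, if_true, Finset.mul_sum]
      refine Finset.sum_congr rfl fun j _ => ?_
      rw [Finset.sum_eq_single j]
      · simp; ring
      · intro r _ hr; simp [Ne.symm hr]
      · simp
    · simp [h]
  rw [h3] at h2
  by_cases h : ℓ = ℓ' <;> simp [h] at h2 ⊢ <;> linarith

lemma alg {J : Fin k → Matrix (Fin m) (Fin m) ℝ}
    (hskew : ∀ ℓ, (J ℓ)ᵀ = -(J ℓ))
    (hcliff : ∀ ℓ ℓ', J ℓ * J ℓ' + J ℓ' * J ℓ =
      (if ℓ = ℓ' then (-2 : ℝ) else 0) • (1 : Matrix (Fin m) (Fin m) ℝ))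
    (z : EuclideanSpace ℝ (Fin m)) (a c : ℝ) (b d : Fin k → ℝ) :
    ∑ i, (z i / 2 * a + (1/2) * ∑ ℓ, (∑ j, J ℓ i j * z j) * b ℓ)
        * (z i / 2 * c + (1/2) * ∑ ℓ, (∑ j, J ℓ i j * z j) * d ℓ)
      = (∑ j, z j ^ 2) / 4 * (a * c + ∑ ℓ, b ℓ * d ℓ) := by
  have key : ∀ i : Fin m,
      (z i / 2 * a + (1/2) * ∑ ℓ, (∑ j, J ℓ i j * z j) * b ℓ)
        * (z i / 2 * c + (1/2) * ∑ ℓ, (∑ j, J ℓ i j * z j) * d ℓ)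
      = a * c / 4 * (z i)^2
        + a / 4 * (z i * ∑ ℓ, (∑ j, J ℓ i j * z j) * d ℓ)
        + c / 4 * (z i * ∑ ℓ, (∑ j, J ℓ i j * z j) * b ℓ)
        + (1/4) * ∑ ℓ, ∑ ℓ', (b ℓ * d ℓ') * ((∑ j, J ℓ i j * z j) * (∑ j, J ℓ' i j * z j)) := by
    intro i
    have e : (∑ ℓ, (∑ j, J ℓ i j * z j) * b ℓ) * (∑ ℓ, (∑ j, J ℓ i j * z j) * d ℓ)
        = ∑ ℓ, ∑ ℓ', (b ℓ * d ℓ') * ((∑ j, J ℓ i j * z j) * (∑ j, J ℓ' i j * z j)) := by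
      rw [Finset.sum_mul_sum]
      exact Finset.sum_congr rfl fun ℓ _ => Finset.sum_congr rfl fun ℓ' _ => by ring
    linear_combination (1/4) * e
  rw [Finset.sum_congr rfl fun i _ => key i]
  repeat rw [Finset.sum_add_distrib]
  have t1 : ∑ i, a * c / 4 * (z i)^2 = a * c / 4 * ∑ j, z j ^ 2 := by
    rw [Finset.mul_sum]
  have t2 : ∑ i, a / 4 * (z i * ∑ ℓ, (∑ j, J ℓ i j * z j) * d ℓ) = 0 := by
    have swap : ∑ i, a / 4 * (z i * ∑ ℓ, (∑ j, J ℓ i j * z j) * d ℓ)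
        = ∑ ℓ, (a / 4 * d ℓ) * ∑ i, z i * (∑ j, J ℓ i j * z j) := by
      have : ∀ i : Fin m, a / 4 * (z i * ∑ ℓ, (∑ j, J ℓ i j * z j) * d ℓ)
          = ∑ ℓ, (a / 4 * d ℓ) * (z i * (∑ j, J ℓ i j * z j)) := by
        intro i; rw [Finset.mul_sum, Finset.mul_sum]
        exact Finset.sum_congr rfl fun ℓ _ => by ring
      rw [Finset.sum_congr rfl fun i _ => this i, Finset.sum_comm]
      exact Finset.sum_congr rfl fun ℓ _ => by rw [Finset.mul_sum]
    rw [swap]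
    refine Finset.sum_eq_zero fun ℓ _ => ?_
    rw [zJz (hskew ℓ) z, mul_zero]
  have t3 : ∑ i, c / 4 * (z i * ∑ ℓ, (∑ j, J ℓ i j * z j) * b ℓ) = 0 := by
    have swap : ∑ i, c / 4 * (z i * ∑ ℓ, (∑ j, J ℓ i j * z j) * b ℓ)
        = ∑ ℓ, (c / 4 * b ℓ) * ∑ i, z i * (∑ j, J ℓ i j * z j) := by
      have : ∀ i : Fin m, c / 4 * (z i * ∑ ℓ, (∑ j, J ℓ i j * z j) * b ℓ)
          = ∑ ℓ, (c / 4 * b ℓ) * (z i * (∑ j, J ℓ i j * z j)) := by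
        intro i; rw [Finset.mul_sum, Finset.mul_sum]
        exact Finset.sum_congr rfl fun ℓ _ => by ring
      rw [Finset.sum_congr rfl fun i _ => this i, Finset.sum_comm]
      exact Finset.sum_congr rfl fun ℓ _ => by rw [Finset.mul_sum]
    rw [swap]
    refine Finset.sum_eq_zero fun ℓ _ => ?_
    rw [zJz (hskew ℓ) z, mul_zero]
  have t4 : ∑ i, (1/4 : ℝ) * ∑ ℓ, ∑ ℓ', (b ℓ * d ℓ') * ((∑ j, J ℓ i j * z j) * (∑ j, J ℓ' i j * z j))
      = (∑ j, z j ^ 2) / 4 * ∑ ℓ, b ℓ * d ℓ := by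
    have swap : ∑ i, (1/4 : ℝ) * ∑ ℓ, ∑ ℓ', (b ℓ * d ℓ') * ((∑ j, J ℓ i j * z j) * (∑ j, J ℓ' i j * z j))
        = ∑ ℓ, ∑ ℓ', ((1/4 : ℝ) * (b ℓ * d ℓ')) * ∑ i, (∑ j, J ℓ i j * z j) * (∑ j, J ℓ' i j * z j) := by
      have : ∀ i : Fin m, (1/4 : ℝ) * ∑ ℓ, ∑ ℓ', (b ℓ * d ℓ') * ((∑ j, J ℓ i j * z j) * (∑ j, J ℓ' i j * z j))
          = ∑ ℓ, ∑ ℓ', ((1/4 : ℝ) * (b ℓ * d ℓ')) * ((∑ j, J ℓ i j * z j) * (∑ j, J ℓ' i j * z j)) := by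
        intro i
        rw [Finset.mul_sum]
        refine Finset.sum_congr rfl fun ℓ _ => ?_
        rw [Finset.mul_sum]
        exact Finset.sum_congr rfl fun ℓ' _ => by ring
      rw [Finset.sum_congr rfl fun i _ => this i, Finset.sum_comm]
      refine Finset.sum_congr rfl fun ℓ _ => ?_
      rw [Finset.sum_comm]
      exact Finset.sum_congr rfl fun ℓ' _ => by rw [Finset.mul_sum]
    rw [swap]
    have : ∀ ℓ : Fin k, ∑ ℓ', ((1/4 : ℝ) * (b ℓ * d ℓ')) * ∑ i, (∑ j, J ℓ i j * z j) * (∑ j, J ℓ' i j * z j)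
        = (∑ j, z j ^ 2) / 4 * (b ℓ * d ℓ) := by
      intro ℓ
      have : ∀ ℓ' : Fin k, ((1/4 : ℝ) * (b ℓ * d ℓ')) * ∑ i, (∑ j, J ℓ i j * z j) * (∑ j, J ℓ' i j * z j)
          = (if ℓ' = ℓ then (∑ j, z j ^ 2) / 4 * (b ℓ * d ℓ') else 0) := by
        intro ℓ'
        rw [JJsum hskew hcliff z ℓ ℓ']
        by_cases h : ℓ' = ℓ
        · subst h; simp; ring
        · simp [h, Ne.symm h]
      rw [Finset.sum_congr rfl fun ℓ' _ => this ℓ', Finset.sum_ite_eq' Finset.univ ℓ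
        (fun ℓ' => (∑ j, z j ^ 2) / 4 * (b ℓ * d ℓ'))]
      simp
    rw [Finset.sum_congr rfl fun ℓ _ => this ℓ, ← Finset.mul_sum]
  rw [t1, t2, t3, t4]
  ring

/-- The symmetry-reduction map. -/
def phiMap (x : Pt m k) : ℝ × EuclideanSpace ℝ (Fin k) := (‖x.1‖ ^ 2 / 4, x.2)

def phiD (x : Pt m k) : Pt m k →L[ℝ] ℝ × EuclideanSpace ℝ (Fin k) :=
  (((1:ℝ)/2) • ((innerSL ℝ x.1).comp
      (ContinuousLinearMap.fst ℝ (EuclideanSpace ℝ (Fin m)) (EuclideanSpace ℝ (Fin k))))).prod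
    (ContinuousLinearMap.snd ℝ (EuclideanSpace ℝ (Fin m)) (EuclideanSpace ℝ (Fin k)))

lemma phi_hasFDerivAt (x : Pt m k) : HasFDerivAt (phiMap (m := m) (k := k)) (phiD x) x := by
  have h1 : HasFDerivAt (fun x' : Pt m k => ‖x'.1‖ ^ 2)
      (2 • (innerSL ℝ x.1).comp
        (ContinuousLinearMap.fst ℝ (EuclideanSpace ℝ (Fin m)) (EuclideanSpace ℝ (Fin k)))) x :=
    hasFDerivAt_fst.norm_sq
  have h1' : HasFDerivAt (fun x' : Pt m k => ‖x'.1‖ ^ 2 / 4)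
      (((1:ℝ)/4) • (2 • (innerSL ℝ x.1).comp
        (ContinuousLinearMap.fst ℝ (EuclideanSpace ℝ (Fin m)) (EuclideanSpace ℝ (Fin k))))) x := by
    have := h1.const_smul ((1:ℝ)/4)
    rw [show (fun x' : Pt m k => ‖x'.1‖ ^ 2 / 4) = ((1:ℝ)/4) • fun x' : Pt m k => ‖x'.1‖ ^ 2 from by
      funext x'; rw [Pi.smul_apply, smul_eq_mul]; ring]
    exact this
  have h2 := h1'.prodMk (hasFDerivAt_snd (p := x))
  have : phiMap (m := m) (k := k) = fun x' : Pt m k => (‖x'.1‖ ^ 2 / 4, x'.2) := rfl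
  rw [this]
  refine h2.congr_fderiv ?_
  ext v <;> simp [phiD] <;> ring

lemma phiD_apply_z (x : Pt m k) (i : Fin m) :
    phiD x (EuclideanSpace.single i 1, 0) = ((x.1 i / 2 : ℝ), (0 : EuclideanSpace ℝ (Fin k))) := by
  simp [phiD, EuclideanSpace.inner_single_right, real_inner_comm]
  ring

lemma phiD_apply_s (x : Pt m k) (ℓ : Fin k) :
    phiD x ((0 : EuclideanSpace ℝ (Fin m)), EuclideanSpace.single ℓ 1)
      = ((0 : ℝ), EuclideanSpace.single ℓ 1) := by
  simp [phiD]

lemma XD_comp (J : Fin k → Matrix (Fin m) (Fin m) ℝ)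
    {u : ℝ × EuclideanSpace ℝ (Fin k) → ℝ} (x : Pt m k)
    (hu : DifferentiableAt ℝ u (phiMap x)) (i : Fin m) :
    XD J (fun x' => u (phiMap x')) i x
      = x.1 i / 2 * gXi u (phiMap x)
        + (1/2) * ∑ ℓ, (∑ j, J ℓ i j * x.1 j) * gS u ℓ (phiMap x) := by
  have hphi := phi_hasFDerivAt x
  have hcomp : fderiv ℝ (fun x' => u (phiMap x')) x = (fderiv ℝ u (phiMap x)).comp (phiD x) := by
    rw [← hphi.fderiv]
    exact fderiv_comp x hu hphi.differentiableAt
  unfold XD gXi gS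
  rw [hcomp]
  simp only [ContinuousLinearMap.comp_apply, phiD_apply_z, phiD_apply_s]
  congr 1
  · have e : ((x.1 i / 2 : ℝ), (0 : EuclideanSpace ℝ (Fin k)))
        = (x.1 i / 2) • (((1:ℝ), (0 : EuclideanSpace ℝ (Fin k)))) := by
      simp [Prod.smul_mk]
    rw [e, (fderiv ℝ u (phiMap x)).map_smul, smul_eq_mul]

lemma XD_add (J : Fin k → Matrix (Fin m) (Fin m) ℝ) {F G : Pt m k → ℝ} {x : Pt m k}
    (hF : DifferentiableAt ℝ F x) (hG : DifferentiableAt ℝ G x) (i : Fin m) :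
    XD J (fun y => F y + G y) i x = XD J F i x + XD J G i x := by
  unfold XD
  rw [fderiv_fun_add hF hG]
  simp only [ContinuousLinearMap.add_apply]
  have e : ∀ c a b : Fin k → ℝ, ∑ ℓ, c ℓ * (a ℓ + b ℓ) = ∑ ℓ, c ℓ * a ℓ + ∑ ℓ, c ℓ * b ℓ := by
    intro c a b
    rw [← Finset.sum_add_distrib]
    exact Finset.sum_congr rfl fun ℓ _ => by ring
  rw [e (fun ℓ => ∑ j, J ℓ i j * x.1 j) (fun ℓ => fderiv ℝ F x (0, EuclideanSpace.single ℓ 1))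
    (fun ℓ => fderiv ℝ G x (0, EuclideanSpace.single ℓ 1))]
  ring

lemma XD_mul (J : Fin k → Matrix (Fin m) (Fin m) ℝ) {F G : Pt m k → ℝ} {x : Pt m k}
    (hF : DifferentiableAt ℝ F x) (hG : DifferentiableAt ℝ G x) (i : Fin m) :
    XD J (fun y => F y * G y) i x = XD J F i x * G x + F x * XD J G i x := by
  unfold XD
  rw [fderiv_fun_mul hF hG]
  simp only [ContinuousLinearMap.add_apply, ContinuousLinearMap.smul_apply, smul_eq_mul]
  have e : ∀ c a b : Fin k → ℝ, ∑ ℓ, c ℓ * (F x * a ℓ + G x * b ℓ)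
      = F x * ∑ ℓ, c ℓ * a ℓ + G x * ∑ ℓ, c ℓ * b ℓ := by
    intro c a b
    rw [Finset.mul_sum, Finset.mul_sum, ← Finset.sum_add_distrib]
    exact Finset.sum_congr rfl fun ℓ _ => by ring
  rw [e (fun ℓ => ∑ j, J ℓ i j * x.1 j) (fun ℓ => fderiv ℝ G x (0, EuclideanSpace.single ℓ 1))
    (fun ℓ => fderiv ℝ F x (0, EuclideanSpace.single ℓ 1))]
  ring

lemma XD_const_mul (J : Fin k → Matrix (Fin m) (Fin m) ℝ) {F : Pt m k → ℝ} {x : Pt m k}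
    (hF : DifferentiableAt ℝ F x) (c : ℝ) (i : Fin m) :
    XD J (fun y => c * F y) i x = c * XD J F i x := by
  unfold XD
  rw [fderiv_const_mul hF c]
  simp only [ContinuousLinearMap.smul_apply, smul_eq_mul]
  have e : ∀ cc a : Fin k → ℝ, ∑ ℓ, cc ℓ * (c * a ℓ) = c * ∑ ℓ, cc ℓ * a ℓ := by
    intro cc a
    rw [Finset.mul_sum]
    exact Finset.sum_congr rfl fun ℓ _ => by ring
  rw [e (fun ℓ => ∑ j, J ℓ i j * x.1 j) (fun ℓ => fderiv ℝ F x (0, EuclideanSpace.single ℓ 1))]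
  ring

lemma XD_sum {n : ℕ} (J : Fin k → Matrix (Fin m) (Fin m) ℝ) {F : Fin n → Pt m k → ℝ} {x : Pt m k}
    (hF : ∀ a, DifferentiableAt ℝ (F a) x) (i : Fin m) :
    XD J (fun y => ∑ a, F a y) i x = ∑ a, XD J (F a) i x := by
  unfold XD
  rw [fderiv_fun_sum (fun a _ => hF a)]
  simp only [ContinuousLinearMap.sum_apply, Finset.mul_sum]
  rw [Finset.sum_add_distrib]
  congr 1
  exact Finset.sum_comm

lemma XD_coord (J : Fin k → Matrix (Fin m) (Fin m) ℝ) (x : Pt m k) (i i' : Fin m) :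
    XD J (fun y : Pt m k => y.1 i') i x = if i' = i then 1 else 0 := by
  have hL : HasFDerivAt (fun y : Pt m k => y.1 i')
      ((EuclideanSpace.proj i').comp
        (ContinuousLinearMap.fst ℝ (EuclideanSpace ℝ (Fin m)) (EuclideanSpace ℝ (Fin k)))) x :=
    ((EuclideanSpace.proj i').comp
        (ContinuousLinearMap.fst ℝ (EuclideanSpace ℝ (Fin m)) (EuclideanSpace ℝ (Fin k)))).hasFDerivAt
  unfold XD
  rw [hL.fderiv]
  simp [EuclideanSpace.single_apply]

lemma algR {J : Fin k → Matrix (Fin m) (Fin m) ℝ}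
    (hskew : ∀ ℓ, (J ℓ)ᵀ = -(J ℓ))
    (hcliff : ∀ ℓ ℓ', J ℓ * J ℓ' + J ℓ' * J ℓ =
      (if ℓ = ℓ' then (-2 : ℝ) else 0) • (1 : Matrix (Fin m) (Fin m) ℝ))
    (z : EuclideanSpace ℝ (Fin m)) (a : ℝ) (b : Fin k → ℝ) :
    ∑ i, (z i / 2) * (z i / 2 * a + (1/2) * ∑ ℓ, (∑ j, J ℓ i j * z j) * b ℓ)
      = (∑ j, z j ^ 2) / 4 * a := by
  have h := alg hskew hcliff z a 1 b (fun _ => 0)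
  simp only [mul_one, mul_zero, Finset.sum_const_zero, add_zero] at h
  rw [← h]
  exact Finset.sum_congr rfl fun i _ => by ring

lemma algL {J : Fin k → Matrix (Fin m) (Fin m) ℝ}
    (hskew : ∀ ℓ, (J ℓ)ᵀ = -(J ℓ))
    (hcliff : ∀ ℓ ℓ', J ℓ * J ℓ' + J ℓ' * J ℓ =
      (if ℓ = ℓ' then (-2 : ℝ) else 0) • (1 : Matrix (Fin m) (Fin m) ℝ))
    (z : EuclideanSpace ℝ (Fin m)) (ℓ₀ : Fin k) (a : ℝ) (b : Fin k → ℝ) :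
    ∑ i, (∑ j, J ℓ₀ i j * z j) * (z i / 2 * a + (1/2) * ∑ ℓ, (∑ j, J ℓ i j * z j) * b ℓ)
      = (∑ j, z j ^ 2) / 2 * b ℓ₀ := by
  have h := alg hskew hcliff z a 0 b (fun ℓ => if ℓ = ℓ₀ then 2 else 0)
  have e1 : ∀ i : Fin m,
      (z i / 2 * 0 + (1/2) * ∑ ℓ, (∑ j, J ℓ i j * z j) * (if ℓ = ℓ₀ then (2:ℝ) else 0))
        = ∑ j, J ℓ₀ i j * z j := by
    intro i
    have : ∑ ℓ, (∑ j, J ℓ i j * z j) * (if ℓ = ℓ₀ then (2:ℝ) else 0)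
        = (∑ j, J ℓ₀ i j * z j) * 2 := by
      rw [Finset.sum_eq_single ℓ₀]
      · simp
      · intro ℓ _ hne; simp [hne]
      · simp
    rw [this]; ring
  have e2 : ∑ ℓ, b ℓ * (if ℓ = ℓ₀ then (2:ℝ) else 0) = b ℓ₀ * 2 := by
    rw [Finset.sum_eq_single ℓ₀]
    · simp
    · intro ℓ _ hne; simp [hne]
    · simp
  rw [Finset.sum_congr rfl fun i _ => by rw [e1 i]] at h
  rw [e2] at h
  rw [Finset.sum_congr rfl fun i _ => mul_comm ((∑ j, J ℓ₀ i j * z j)) _]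
  rw [h]; ring

section CD
variable {g : ℝ × EuclideanSpace ℝ (Fin k) → ℝ}

lemma contDiff_gXi (hg : ContDiff ℝ 2 g) : ContDiff ℝ 1 (gXi g) := by
  have h := (hg.fderiv_right (m := 1) (by norm_num)).clm_apply
    (contDiff_const (c := ((1:ℝ), (0 : EuclideanSpace ℝ (Fin k)))))
  exact h

lemma contDiff_gS (hg : ContDiff ℝ 2 g) (ℓ : Fin k) : ContDiff ℝ 1 (gS g ℓ) := by
  have h := (hg.fderiv_right (m := 1) (by norm_num)).clm_apply
    (contDiff_const (c := ((0:ℝ), EuclideanSpace.single ℓ 1)))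
  exact h

lemma contDiff_gGradSq (hg : ContDiff ℝ 2 g) : ContDiff ℝ 1 (gGradSq g) := by
  have : gGradSq g = fun y => (gXi g y) ^ 2 + ∑ ℓ, (gS g ℓ y) ^ 2 := rfl
  rw [this]
  exact ((contDiff_gXi hg).pow 2).add
    (ContDiff.sum fun ℓ _ => (contDiff_gS hg ℓ).pow 2)

lemma diff_phiMap : Differentiable ℝ (phiMap (m := m) (k := k)) :=
  fun x => (phi_hasFDerivAt x).differentiableAt

lemma diff_comp_phi {u : ℝ × EuclideanSpace ℝ (Fin k) → ℝ} (hu : Differentiable ℝ u) :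
    Differentiable ℝ (fun x' : Pt m k => u (phiMap x')) :=
  hu.comp diff_phiMap

lemma diff_coord (i' : Fin m) : Differentiable ℝ (fun y : Pt m k => y.1 i') :=
  ((EuclideanSpace.proj i').comp
    (ContinuousLinearMap.fst ℝ (EuclideanSpace ℝ (Fin m)) (EuclideanSpace ℝ (Fin k)))).differentiable

end CD

lemma sum_XD_Zi {J : Fin k → Matrix (Fin m) (Fin m) ℝ} (hJ : HType J)
    {g : ℝ × EuclideanSpace ℝ (Fin k) → ℝ} (hg : ContDiff ℝ 2 g) (x : Pt m k) :
    ∑ i, XD J (fun x' => x'.1 i / 2 * gXi g (phiMap x')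
        + (1/2) * ∑ ℓ, (∑ j, J ℓ i j * x'.1 j) * gS g ℓ (phiMap x')) i x
    = (m : ℝ)/2 * gXi g (phiMap x)
      + (∑ j, x.1 j ^ 2)/4 * (gXiXi g (phiMap x) + gLapS g (phiMap x)) := by
  obtain ⟨hskew, hcliff⟩ := hJ
  have hP : Differentiable ℝ (fun x' : Pt m k => gXi g (phiMap x')) :=
    diff_comp_phi ((contDiff_gXi hg).differentiable one_ne_zero)
  have hQ : ∀ ℓ, Differentiable ℝ (fun x' : Pt m k => gS g ℓ (phiMap x')) :=
    fun ℓ => diff_comp_phi ((contDiff_gS hg ℓ).differentiable one_ne_zero)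
  have hc : ∀ ℓ i, Differentiable ℝ (fun x' : Pt m k => ∑ j, J ℓ i j * x'.1 j) :=
    fun ℓ i => Differentiable.fun_sum fun j _ => (diff_coord j).const_mul _
  have hdiag : ∀ ℓ i, J ℓ i i = 0 := by
    intro ℓ i
    have := congrFun (congrFun (hskew ℓ) i) i
    simp only [Matrix.transpose_apply, Matrix.neg_apply] at this
    linarith
  have hhalfdiff : ∀ i, Differentiable ℝ (fun y : Pt m k => y.1 i / 2) := by
    intro i
    have e : (fun y : Pt m k => y.1 i / 2) = fun y => (1/2 : ℝ) * y.1 i :=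
      funext fun y => by ring
    rw [e]; exact (diff_coord i).const_mul _
  have hhalf : ∀ i, XD J (fun y : Pt m k => y.1 i / 2) i x = 1/2 := by
    intro i
    have e : (fun y : Pt m k => y.1 i / 2) = fun y => (1/2 : ℝ) * y.1 i :=
      funext fun y => by ring
    rw [e, XD_const_mul J ((diff_coord i) x) (1/2) i, XD_coord]
    simp
  have hXDc : ∀ ℓ i, XD J (fun x' : Pt m k => ∑ j, J ℓ i j * x'.1 j) i x = 0 := by
    intro ℓ i
    rw [XD_sum J (F := fun j => fun x' : Pt m k => J ℓ i j * x'.1 j)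
      (fun j => ((diff_coord j).const_mul (J ℓ i j)) x) i]
    have : ∀ j, XD J (fun x' : Pt m k => J ℓ i j * x'.1 j) i x
        = J ℓ i j * (if j = i then (1:ℝ) else 0) := by
      intro j
      rw [XD_const_mul J ((diff_coord j) x) _ i, XD_coord]
    rw [Finset.sum_congr rfl fun j _ => this j, Finset.sum_eq_single i]
    · simp [hdiag]
    · intro j _ hne; simp [hne]
    · simp
  have key : ∀ i, XD J (fun x' => x'.1 i / 2 * gXi g (phiMap x')
        + (1/2) * ∑ ℓ, (∑ j, J ℓ i j * x'.1 j) * gS g ℓ (phiMap x')) i x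
      = (1/2) * gXi g (phiMap x)
        + (x.1 i / 2) * (x.1 i / 2 * gXi (gXi g) (phiMap x)
            + (1/2) * ∑ ℓ, (∑ j, J ℓ i j * x.1 j) * gS (gXi g) ℓ (phiMap x))
        + (1/2) * ∑ ℓ, (∑ j, J ℓ i j * x.1 j)
            * (x.1 i / 2 * gXi (gS g ℓ) (phiMap x)
              + (1/2) * ∑ ℓ', (∑ j, J ℓ' i j * x.1 j) * gS (gS g ℓ) ℓ' (phiMap x)) := by
    intro i
    have hF1 : DifferentiableAt ℝ (fun x' : Pt m k => x'.1 i / 2 * gXi g (phiMap x')) x :=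
      ((hhalfdiff i) x).mul (hP x)
    have hF2 : DifferentiableAt ℝ
        (fun x' : Pt m k => (1/2 : ℝ) * ∑ ℓ, (∑ j, J ℓ i j * x'.1 j) * gS g ℓ (phiMap x')) x :=
      ((Differentiable.fun_sum fun ℓ _ => (hc ℓ i).mul (hQ ℓ)) x).const_mul _
    rw [XD_add J hF1 hF2 i]
    rw [XD_mul J ((hhalfdiff i) x) (hP x) i]
    rw [hhalf i]
    rw [XD_comp J x (((contDiff_gXi hg).differentiable one_ne_zero) (phiMap x)) i]
    rw [XD_const_mul J ((Differentiable.fun_sum fun ℓ _ => (hc ℓ i).fun_mul (hQ ℓ)) x) _ i]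
    rw [XD_sum J (fun ℓ => ((hc ℓ i).fun_mul (hQ ℓ)) x) i]
    have inner : ∀ ℓ, XD J (fun x' : Pt m k => (∑ j, J ℓ i j * x'.1 j) * gS g ℓ (phiMap x')) i x
        = (∑ j, J ℓ i j * x.1 j)
            * (x.1 i / 2 * gXi (gS g ℓ) (phiMap x)
              + (1/2) * ∑ ℓ', (∑ j, J ℓ' i j * x.1 j) * gS (gS g ℓ) ℓ' (phiMap x)) := by
      intro ℓ
      rw [XD_mul J ((hc ℓ i) x) (hQ ℓ x) i, hXDc ℓ i,
        XD_comp J x (((contDiff_gS hg ℓ).differentiable one_ne_zero) (phiMap x)) i]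
      ring
    rw [Finset.sum_congr rfl fun ℓ _ => inner ℓ]
  rw [Finset.sum_congr rfl fun i _ => key i]
  rw [Finset.sum_add_distrib, Finset.sum_add_distrib]
  have T1 : ∑ _i : Fin m, (1/2 : ℝ) * gXi g (phiMap x) = (m : ℝ)/2 * gXi g (phiMap x) := by
    rw [Finset.sum_const, Finset.card_univ, Fintype.card_fin, nsmul_eq_mul]
    ring
  have T2 := algR hskew hcliff x.1 (gXi (gXi g) (phiMap x)) (fun ℓ => gS (gXi g) ℓ (phiMap x))
  have T3 : ∑ i, (1/2 : ℝ) * ∑ ℓ, (∑ j, J ℓ i j * x.1 j)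
        * (x.1 i / 2 * gXi (gS g ℓ) (phiMap x)
          + (1/2) * ∑ ℓ', (∑ j, J ℓ' i j * x.1 j) * gS (gS g ℓ) ℓ' (phiMap x))
      = (∑ j, x.1 j ^ 2)/4 * ∑ ℓ, gS (gS g ℓ) ℓ (phiMap x) := by
    have swap : ∑ i, (1/2 : ℝ) * ∑ ℓ, (∑ j, J ℓ i j * x.1 j)
          * (x.1 i / 2 * gXi (gS g ℓ) (phiMap x)
            + (1/2) * ∑ ℓ', (∑ j, J ℓ' i j * x.1 j) * gS (gS g ℓ) ℓ' (phiMap x))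
        = (1/2 : ℝ) * ∑ ℓ, ∑ i, (∑ j, J ℓ i j * x.1 j)
          * (x.1 i / 2 * gXi (gS g ℓ) (phiMap x)
            + (1/2) * ∑ ℓ', (∑ j, J ℓ' i j * x.1 j) * gS (gS g ℓ) ℓ' (phiMap x)) := by
      rw [← Finset.mul_sum]
      congr 1
      exact Finset.sum_comm
    rw [swap]
    have : ∀ ℓ, ∑ i, (∑ j, J ℓ i j * x.1 j)
          * (x.1 i / 2 * gXi (gS g ℓ) (phiMap x)
            + (1/2) * ∑ ℓ', (∑ j, J ℓ' i j * x.1 j) * gS (gS g ℓ) ℓ' (phiMap x))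
        = (∑ j, x.1 j ^ 2)/2 * gS (gS g ℓ) ℓ (phiMap x) :=
      fun ℓ => algL hskew hcliff x.1 ℓ (gXi (gS g ℓ) (phiMap x))
        (fun ℓ' => gS (gS g ℓ) ℓ' (phiMap x))
    rw [Finset.sum_congr rfl fun ℓ _ => this ℓ, Finset.mul_sum, Finset.mul_sum]
    exact Finset.sum_congr rfl fun ℓ _ => by ring
  rw [T1, T2, T3]
  have e1 : gXiXi g (phiMap x) = gXi (gXi g) (phiMap x) := rfl
  have e2 : gLapS g (phiMap x) = ∑ ℓ, gS (gS g ℓ) ℓ (phiMap x) := rfl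
  rw [e1, e2]
  ring

/-- The radialized weight (ξ·|∇g|²)^((p-2)/2) as a function on ℝ × ℝᵏ. -/
def vF (g : ℝ × EuclideanSpace ℝ (Fin k) → ℝ) (p : ℝ) (yy : ℝ × EuclideanSpace ℝ (Fin k)) : ℝ :=
  (yy.1 * gGradSq g yy) ^ ((p - 2) / 2)

/-- The horizontal derivative of the radialized function, as a function. -/
def zF (J : Fin k → Matrix (Fin m) (Fin m) ℝ) (g : ℝ × EuclideanSpace ℝ (Fin k) → ℝ)
    (i : Fin m) (x' : Pt m k) : ℝ :=
  x'.1 i / 2 * gXi g (phiMap x')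
    + (1/2) * ∑ ℓ, (∑ j, J ℓ i j * x'.1 j) * gS g ℓ (phiMap x')

lemma hGradSq_eq {J : Fin k → Matrix (Fin m) (Fin m) ℝ} (hJ : HType J)
    {g : ℝ × EuclideanSpace ℝ (Fin k) → ℝ} (hg : ContDiff ℝ 2 g) :
    hGradSq J (fun x' : Pt m k => g (phiMap x'))
      = fun x' => (‖x'.1‖ ^ 2 / 4) * gGradSq g (phiMap x') := by
  funext x'
  unfold hGradSq
  have hXD : ∀ i, XD J (fun x'' => g (phiMap x'')) i x'
      = x'.1 i / 2 * gXi g (phiMap x')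
        + (1/2) * ∑ ℓ, (∑ j, J ℓ i j * x'.1 j) * gS g ℓ (phiMap x') :=
    fun i => XD_comp J x' ((hg.differentiable (by norm_num)) (phiMap x')) i
  rw [Finset.sum_congr rfl fun i _ => by rw [hXD i, pow_two]]
  rw [alg hJ.1 hJ.2 x'.1 (gXi g (phiMap x')) (gXi g (phiMap x'))
    (fun ℓ => gS g ℓ (phiMap x')) (fun ℓ => gS g ℓ (phiMap x'))]
  rw [← normsq_eq x'.1]
  have : gGradSq g (phiMap x') = gXi g (phiMap x') * gXi g (phiMap x')
      + ∑ ℓ, gS g ℓ (phiMap x') * gS g ℓ (phiMap x') := by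
    unfold gGradSq
    rw [pow_two]
    congr 1
    exact Finset.sum_congr rfl fun ℓ _ => pow_two _
  rw [this]

/-- for 1 < p < ∞ and f(z,σ) = g(|z|²/4, σ) with g of class C², at every point
with z ≠ 0 and ∇g(ξ,σ) ≠ 0, where ξ = |z|²/4,
Δ_{H,p} f = ξ^{p/2} |∇g|^{p−2} [ g_{ξξ} + ((m+p−2)/(2ξ)) g_ξ + Δ_σ g + (p−2) Δ_∞ g/|∇g|² ]. -/
theorem horizontal_p_laplacian_of_partial_symmetry
    (hm : 1 ≤ m) (hk : 1 ≤ k)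
    (J : Fin k → Matrix (Fin m) (Fin m) ℝ) (hJ : HType J)
    (p : ℝ) (hp : 1 < p)
    (g : ℝ × EuclideanSpace ℝ (Fin k) → ℝ) (hg : ContDiff ℝ 2 g)
    (f : Pt m k → ℝ) (hf : ∀ x : Pt m k, f x = g (‖x.1‖ ^ 2 / 4, x.2))
    (x : Pt m k) (hz : x.1 ≠ 0)
    (hgrad : gGradSq g (‖x.1‖ ^ 2 / 4, x.2) ≠ 0) :
    hPLap J p f x =
      (‖x.1‖ ^ 2 / 4) ^ (p / 2) * (gGradSq g (‖x.1‖ ^ 2 / 4, x.2)) ^ ((p - 2) / 2) *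
        (gXiXi g (‖x.1‖ ^ 2 / 4, x.2)
          + (((m : ℝ) + p - 2) / (2 * (‖x.1‖ ^ 2 / 4))) * gXi g (‖x.1‖ ^ 2 / 4, x.2)
          + gLapS g (‖x.1‖ ^ 2 / 4, x.2)
          + (p - 2) * gInf g (‖x.1‖ ^ 2 / 4, x.2) / gGradSq g (‖x.1‖ ^ 2 / 4, x.2)) := by
  obtain ⟨hskew, hcliff⟩ := hJ
  have hgd : Differentiable ℝ g := hg.differentiable (by norm_num)
  have hfg : f = fun x' : Pt m k => g (phiMap x') := funext fun x' => hf x'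
  rw [hfg]
  rw [show ((‖x.1‖ ^ 2 / 4 : ℝ), x.2) = phiMap x from rfl]
  have hnormpos : 0 < ‖x.1‖ := norm_pos_iff.mpr hz
  have hξpos : (0:ℝ) < ‖x.1‖ ^ 2 / 4 := by positivity
  have hξne : (‖x.1‖ ^ 2 / 4 : ℝ) ≠ 0 := ne_of_gt hξpos
  have hGnn : 0 ≤ gGradSq g (phiMap x) := by
    have : gGradSq g (phiMap x)
        = (gXi g (phiMap x)) ^ 2 + ∑ ℓ, (gS g ℓ (phiMap x)) ^ 2 := rfl
    rw [this]; positivity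
  have hGne : gGradSq g (phiMap x) ≠ 0 := hgrad
  have hGpos : 0 < gGradSq g (phiMap x) := lt_of_le_of_ne hGnn (Ne.symm hGne)
  have hApos : 0 < ‖x.1‖ ^ 2 / 4 * gGradSq g (phiMap x) := mul_pos hξpos hGpos
  have hAne : ‖x.1‖ ^ 2 / 4 * gGradSq g (phiMap x) ≠ 0 := ne_of_gt hApos
  have hGdiff : Differentiable ℝ (gGradSq g) := (contDiff_gGradSq hg).differentiable one_ne_zero
  have hwdiff : Differentiable ℝ (fun yy : ℝ × EuclideanSpace ℝ (Fin k) => yy.1 * gGradSq g yy) :=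
    differentiable_fst.mul hGdiff
  have hvdiff : DifferentiableAt ℝ (vF g p) (phiMap x) :=
    (hwdiff (phiMap x)).rpow_const (Or.inl hAne)
  have hA'diff : DifferentiableAt ℝ (fun y' : Pt m k => vF g p (phiMap y')) x :=
    hvdiff.comp x (diff_phiMap x)
  have hZd : ∀ i, Differentiable ℝ (zF J g i) := by
    intro i
    have h1 : Differentiable ℝ (fun y : Pt m k => y.1 i / 2) := by
      have e : (fun y : Pt m k => y.1 i / 2) = fun y => (1/2 : ℝ) * y.1 i :=
        funext fun y => by ring
      rw [e]; exact (diff_coord i).const_mul _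
    have : Differentiable ℝ (fun x' : Pt m k => x'.1 i / 2 * gXi g (phiMap x')
        + (1/2) * ∑ ℓ, (∑ j, J ℓ i j * x'.1 j) * gS g ℓ (phiMap x')) :=
      (h1.mul (diff_comp_phi ((contDiff_gXi hg).differentiable one_ne_zero))).add
        ((Differentiable.fun_sum fun ℓ _ =>
          (Differentiable.fun_sum fun j _ => (diff_coord j).const_mul _).mul
            (diff_comp_phi ((contDiff_gS hg ℓ).differentiable one_ne_zero))).const_mul _)
    exact this
  have hGS := hGradSq_eq ⟨hskew, hcliff⟩ hg
  have hXDfun : ∀ i, XD J (fun x' => g (phiMap x')) i = zF J g i :=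
    fun i => funext fun x' => XD_comp J x' (hgd (phiMap x')) i
  have hint : ∀ i, (fun y' => hGradSq J (fun x' => g (phiMap x')) y' ^ ((p - 2)/2)
      * XD J (fun x' => g (phiMap x')) i y') = fun y' => vF g p (phiMap y') * zF J g i y' := by
    intro i
    funext y'
    simp only [hGS, hXDfun i]
    rfl
  unfold hPLap
  rw [Finset.sum_congr rfl fun i _ => by rw [hint i]]
  have hstep : ∀ i, XD J (fun y' => vF g p (phiMap y') * zF J g i y') i x
      = XD J (fun y' => vF g p (phiMap y')) i x * zF J g i x
        + vF g p (phiMap x) * XD J (zF J g i) i x :=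
    fun i => XD_mul J hA'diff (hZd i x) i
  rw [Finset.sum_congr rfl fun i _ => hstep i]
  rw [Finset.sum_add_distrib]
  have hsum2 : ∑ i, vF g p (phiMap x) * XD J (zF J g i) i x
      = vF g p (phiMap x) * ((m : ℝ)/2 * gXi g (phiMap x)
          + (∑ j, x.1 j ^ 2)/4 * (gXiXi g (phiMap x) + gLapS g (phiMap x))) := by
    rw [← Finset.mul_sum]
    congr 1
    exact sum_XD_Zi ⟨hskew, hcliff⟩ hg x
  have hXDA : ∀ i, XD J (fun y' => vF g p (phiMap y')) i x
      = x.1 i / 2 * gXi (vF g p) (phiMap x)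
        + (1/2) * ∑ ℓ, (∑ j, J ℓ i j * x.1 j) * gS (vF g p) ℓ (phiMap x) :=
    fun i => XD_comp J x hvdiff i
  have hsum1 : ∑ i, XD J (fun y' => vF g p (phiMap y')) i x * zF J g i x
      = (∑ j, x.1 j ^ 2)/4 * (gXi (vF g p) (phiMap x) * gXi g (phiMap x)
          + ∑ ℓ, gS (vF g p) ℓ (phiMap x) * gS g ℓ (phiMap x)) := by
    rw [Finset.sum_congr rfl fun i _ => by rw [hXDA i]]
    exact alg hskew hcliff x.1 _ _ _ _
  have hwF : HasFDerivAt (fun yy : ℝ × EuclideanSpace ℝ (Fin k) => yy.1 * gGradSq g yy)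
      ((‖x.1‖ ^ 2 / 4) • fderiv ℝ (gGradSq g) (phiMap x)
        + (gGradSq g (phiMap x)) • (ContinuousLinearMap.fst ℝ ℝ (EuclideanSpace ℝ (Fin k))))
      (phiMap x) := by
    have h := (hasFDerivAt_fst (p := phiMap x)).mul ((hGdiff (phiMap x)).hasFDerivAt)
    exact h
  have hvF : HasFDerivAt (vF g p)
      ((((p-2)/2) * ((‖x.1‖ ^ 2 / 4) * gGradSq g (phiMap x)) ^ ((p-2)/2 - 1)) •
        ((‖x.1‖ ^ 2 / 4) • fderiv ℝ (gGradSq g) (phiMap x)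
          + (gGradSq g (phiMap x)) • (ContinuousLinearMap.fst ℝ ℝ (EuclideanSpace ℝ (Fin k)))))
      (phiMap x) := hwF.rpow_const (Or.inl hAne)
  have hgXiv : gXi (vF g p) (phiMap x)
      = ((p-2)/2) * ((‖x.1‖ ^ 2 / 4) * gGradSq g (phiMap x)) ^ ((p-2)/2 - 1)
        * ((‖x.1‖ ^ 2 / 4) * fderiv ℝ (gGradSq g) (phiMap x) ((1:ℝ), (0 : EuclideanSpace ℝ (Fin k)))
            + gGradSq g (phiMap x)) := by
    have : gXi (vF g p) (phiMap x)
        = fderiv ℝ (vF g p) (phiMap x) ((1:ℝ), (0 : EuclideanSpace ℝ (Fin k))) := rfl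
    rw [this, hvF.fderiv]
    simp only [ContinuousLinearMap.smul_apply, ContinuousLinearMap.add_apply,
      ContinuousLinearMap.coe_fst', smul_eq_mul]
    ring
  have hgSv : ∀ ℓ, gS (vF g p) ℓ (phiMap x)
      = ((p-2)/2) * ((‖x.1‖ ^ 2 / 4) * gGradSq g (phiMap x)) ^ ((p-2)/2 - 1)
        * ((‖x.1‖ ^ 2 / 4) * fderiv ℝ (gGradSq g) (phiMap x)
            ((0:ℝ), EuclideanSpace.single ℓ 1)) := by
    intro ℓ
    have : gS (vF g p) ℓ (phiMap x)
        = fderiv ℝ (vF g p) (phiMap x) ((0:ℝ), EuclideanSpace.single ℓ 1) := rfl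
    rw [this, hvF.fderiv]
    simp only [ContinuousLinearMap.smul_apply, ContinuousLinearMap.add_apply,
      ContinuousLinearMap.coe_fst', smul_eq_mul]
    ring
  have hsumS : ∑ ℓ, gS (vF g p) ℓ (phiMap x) * gS g ℓ (phiMap x)
      = ((p-2)/2) * ((‖x.1‖ ^ 2 / 4) * gGradSq g (phiMap x)) ^ ((p-2)/2 - 1) * (‖x.1‖ ^ 2 / 4)
        * ∑ ℓ, fderiv ℝ (gGradSq g) (phiMap x) ((0:ℝ), EuclideanSpace.single ℓ 1)
            * gS g ℓ (phiMap x) := by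
    rw [Finset.mul_sum]
    exact Finset.sum_congr rfl fun ℓ _ => by rw [hgSv ℓ]; ring
  have hInf : gInf g (phiMap x)
      = (1/2) * (fderiv ℝ (gGradSq g) (phiMap x) ((1:ℝ), (0 : EuclideanSpace ℝ (Fin k)))
          * gXi g (phiMap x)
        + ∑ ℓ, fderiv ℝ (gGradSq g) (phiMap x) ((0:ℝ), EuclideanSpace.single ℓ 1)
            * gS g ℓ (phiMap x)) := rfl
  have hvVal : vF g p (phiMap x)
      = ((‖x.1‖ ^ 2 / 4) * gGradSq g (phiMap x)) ^ ((p-2)/2) := rfl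
  have hns : (∑ j, x.1 j ^ 2) = ‖x.1‖ ^ 2 := (normsq_eq x.1).symm
  have hE1 : ((‖x.1‖ ^ 2 / 4) * gGradSq g (phiMap x)) ^ ((p-2)/2 - 1)
      = ((‖x.1‖ ^ 2 / 4) * gGradSq g (phiMap x)) ^ ((p-2)/2)
        / ((‖x.1‖ ^ 2 / 4) * gGradSq g (phiMap x)) := by
    rw [Real.rpow_sub hApos, Real.rpow_one]
  have hE2 : ((‖x.1‖ ^ 2 / 4) * gGradSq g (phiMap x)) ^ ((p-2)/2)
      = (‖x.1‖ ^ 2 / 4) ^ ((p-2)/2) * gGradSq g (phiMap x) ^ ((p-2)/2) :=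
    Real.mul_rpow hξpos.le hGnn
  have hE3 : (‖x.1‖ ^ 2 / 4 : ℝ) ^ (p/2)
      = (‖x.1‖ ^ 2 / 4) ^ ((p-2)/2) * (‖x.1‖ ^ 2 / 4) := by
    have e : p/2 = (p-2)/2 + 1 := by ring
    rw [e, Real.rpow_add hξpos, Real.rpow_one]
  rw [hsum1, hsum2, hgXiv, hsumS, hvVal, hns, hInf, hE1, hE2, hE3]
  have hEne : (‖x.1‖ ^ 2 / 4 : ℝ) ^ ((p-2)/2) ≠ 0 := by positivity
  have hGEne : gGradSq g (phiMap x) ^ ((p-2)/2) ≠ 0 := by positivity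
  field_simp
  ring

end
end

section
/- Let 1 < p < ∞, R > 0, Q = m + 2k, and let f(z,σ) = ((p−1)/(2p(Q+p)^{1/(p−1)})) · ( R^{2p/(p−1)} − N(z,σ)^{2p/(p−1)} ), where N(z,σ) = (|z|⁴ + 16|σ|²)^{1/4}. Then at every point (z,σ) ≠ (0,0): (i) |∇_H f(z,σ)|^p = N(z,σ)^{2p/(p−1)} |z|^p / (Q+p)^{p/(p−1)}; (ii) consequently the P-function P(z,σ) = |∇_H f(z,σ)|^p + (2p/((p−1)(Q+p))) f(z,σ) |z|^p satisfies the pointwise identity P(z,σ) = c^p |z|^p with c = (R²/(Q+p))^{1/(p−1)}. -/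
open scoped BigOperators
open Matrix

noncomputable section

variable {m k : ℕ}

-- AUX LEMMAS
lemma sum_mulVec_apply (A : Matrix (Fin m) (Fin m) ℝ) (z : Fin m → ℝ) (i : Fin m) :
    ∑ j, A i j * z j = (A *ᵥ z) i := by
  simp [Matrix.mulVec, dotProduct]

lemma skew_dot (A : Matrix (Fin m) (Fin m) ℝ) (hA : Aᵀ = -A) (z : Fin m → ℝ) :
    z ⬝ᵥ (A *ᵥ z) = 0 := by
  have h1 : z ⬝ᵥ (A *ᵥ z) = (Aᵀ *ᵥ z) ⬝ᵥ z := by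
    rw [Matrix.dotProduct_mulVec, Matrix.mulVec_transpose]
  rw [hA, Matrix.neg_mulVec, neg_dotProduct, dotProduct_comm] at h1
  rw [dotProduct_comm]
  linarith

lemma cross_dot (A B : Matrix (Fin m) (Fin m) ℝ) (z : Fin m → ℝ) :
    (A *ᵥ z) ⬝ᵥ (B *ᵥ z) = z ⬝ᵥ ((Aᵀ * B) *ᵥ z) := by
  have : z ⬝ᵥ ((Aᵀ * B) *ᵥ z) = (z ᵥ* Aᵀ) ⬝ᵥ (B *ᵥ z) := by
    rw [← Matrix.mulVec_mulVec, Matrix.dotProduct_mulVec]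
  rw [this, Matrix.vecMul_transpose]

lemma anticomm_dot (J : Fin k → Matrix (Fin m) (Fin m) ℝ) (hJ : HType J)
    (z : Fin m → ℝ) (ℓ ℓ' : Fin k) :
    (J ℓ *ᵥ z) ⬝ᵥ (J ℓ' *ᵥ z) + (J ℓ' *ᵥ z) ⬝ᵥ (J ℓ *ᵥ z)
      = (if ℓ = ℓ' then (2 : ℝ) else 0) * (z ⬝ᵥ z) := by
  rw [cross_dot, cross_dot, hJ.1, hJ.1, Matrix.neg_mul, Matrix.neg_mul,
    Matrix.neg_mulVec, Matrix.neg_mulVec, dotProduct_neg, dotProduct_neg,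
    ← neg_add, ← dotProduct_add, ← Matrix.add_mulVec, hJ.2 ℓ ℓ',
    Matrix.smul_mulVec, Matrix.one_mulVec, dotProduct_smul]
  by_cases h : ℓ = ℓ' <;> simp [h]

lemma clifford_sum (J : Fin k → Matrix (Fin m) (Fin m) ℝ) (hJ : HType J)
    (z : Fin m → ℝ) (σ : Fin k → ℝ) :
    ∑ i, (∑ ℓ, σ ℓ * (J ℓ *ᵥ z) i) ^ 2 = (∑ ℓ, σ ℓ ^ 2) * (z ⬝ᵥ z) := by
  set T : Fin k → Fin k → ℝ := fun ℓ ℓ' => (J ℓ *ᵥ z) ⬝ᵥ (J ℓ' *ᵥ z) with hT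
  have h1 : ∑ i, (∑ ℓ, σ ℓ * (J ℓ *ᵥ z) i) ^ 2
      = ∑ ℓ, ∑ ℓ', (σ ℓ * σ ℓ') * T ℓ ℓ' := by
    have e1 : ∀ i : Fin m, (∑ ℓ, σ ℓ * (J ℓ *ᵥ z) i)^2
        = ∑ ℓ, ∑ ℓ', (σ ℓ * σ ℓ') * ((J ℓ *ᵥ z) i * (J ℓ' *ᵥ z) i) := by
      intro i
      rw [sq, Finset.sum_mul_sum]
      exact Finset.sum_congr rfl fun ℓ _ => Finset.sum_congr rfl fun ℓ' _ => by ring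
    simp only [e1]
    rw [Finset.sum_comm]
    refine Finset.sum_congr rfl fun ℓ _ => ?_
    rw [Finset.sum_comm]
    refine Finset.sum_congr rfl fun ℓ' _ => ?_
    simp only [hT]
    rw [dotProduct, Finset.mul_sum]
  have h2 : ∑ ℓ, ∑ ℓ', (σ ℓ * σ ℓ') * T ℓ ℓ'
      = ∑ ℓ, ∑ ℓ', (σ ℓ * σ ℓ') * T ℓ' ℓ := by
    rw [Finset.sum_comm]
    exact Finset.sum_congr rfl fun ℓ _ => Finset.sum_congr rfl fun ℓ' _ => by ring
  have h3 : (2:ℝ) * ∑ ℓ, ∑ ℓ', (σ ℓ * σ ℓ') * T ℓ ℓ'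
      = ∑ ℓ, ∑ ℓ', (σ ℓ * σ ℓ') * ((if ℓ = ℓ' then (2:ℝ) else 0) * (z ⬝ᵥ z)) := by
    rw [two_mul]
    nth_rewrite 2 [h2]
    rw [← Finset.sum_add_distrib]
    refine Finset.sum_congr rfl fun ℓ _ => ?_
    rw [← Finset.sum_add_distrib]
    refine Finset.sum_congr rfl fun ℓ' _ => ?_
    rw [← mul_add, anticomm_dot J hJ z ℓ ℓ']
  have h4 : ∑ ℓ, ∑ ℓ', (σ ℓ * σ ℓ') * ((if ℓ = ℓ' then (2:ℝ) else 0) * (z ⬝ᵥ z))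
      = 2 * ((∑ ℓ, σ ℓ ^ 2) * (z ⬝ᵥ z)) := by
    have e : ∀ ℓ, ∑ ℓ', σ ℓ * σ ℓ' * ((if ℓ = ℓ' then (2:ℝ) else 0) * (z ⬝ᵥ z))
        = 2 * (σ ℓ ^ 2 * (z ⬝ᵥ z)) := by
      intro ℓ
      rw [Finset.sum_eq_single ℓ]
      · simp; ring
      · intro b _ hb; simp [Ne.symm hb]
      · simp
    simp only [e]
    rw [Finset.sum_mul, Finset.mul_sum]
  rw [h1]; linarith [h3, h4.symm ▸ h3]

lemma key_sum (J : Fin k → Matrix (Fin m) (Fin m) ℝ) (hJ : HType J)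
    (z : Fin m → ℝ) (σ : Fin k → ℝ) :
    ∑ i, ((z ⬝ᵥ z) * z i + 4 * ∑ ℓ, (J ℓ *ᵥ z) i * σ ℓ) ^ 2
      = ((z ⬝ᵥ z) ^ 2 + 16 * ∑ ℓ, σ ℓ ^ 2) * (z ⬝ᵥ z) := by
  have hW : ∀ i, ∑ ℓ, (J ℓ *ᵥ z) i * σ ℓ = ∑ ℓ, σ ℓ * (J ℓ *ᵥ z) i :=
    fun i => Finset.sum_congr rfl fun ℓ _ => mul_comm _ _
  have e : ∀ i : Fin m, ((z ⬝ᵥ z) * z i + 4 * ∑ ℓ, σ ℓ * (J ℓ *ᵥ z) i) ^ 2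
      = (z ⬝ᵥ z)^2 * (z i * z i) + 8 * (z ⬝ᵥ z) * (z i * ∑ ℓ, σ ℓ * (J ℓ *ᵥ z) i)
        + 16 * (∑ ℓ, σ ℓ * (J ℓ *ᵥ z) i) ^ 2 := fun i => by ring
  simp only [hW, e, Finset.sum_add_distrib]
  have s1 : ∑ i, (z ⬝ᵥ z)^2 * (z i * z i) = (z ⬝ᵥ z)^2 * (z ⬝ᵥ z) := by
    rw [← Finset.mul_sum]; rfl
  have hzW : ∑ i, z i * ∑ ℓ, σ ℓ * (J ℓ *ᵥ z) i = 0 := by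
    have e2 : ∀ i : Fin m, z i * ∑ ℓ, σ ℓ * (J ℓ *ᵥ z) i
        = ∑ ℓ, σ ℓ * (z i * (J ℓ *ᵥ z) i) := by
      intro i; rw [Finset.mul_sum]; exact Finset.sum_congr rfl fun ℓ _ => by ring
    simp only [e2]
    rw [Finset.sum_comm]
    refine Finset.sum_eq_zero fun ℓ _ => ?_
    rw [← Finset.mul_sum]
    have : (∑ i, z i * (J ℓ *ᵥ z) i) = z ⬝ᵥ (J ℓ *ᵥ z) := rfl
    rw [this, skew_dot (J ℓ) (hJ.1 ℓ) z, mul_zero]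
  have s2 : ∑ i, 8 * (z ⬝ᵥ z) * (z i * ∑ ℓ, σ ℓ * (J ℓ *ᵥ z) i) = 0 := by
    rw [← Finset.mul_sum, hzW, mul_zero]
  have s3 : ∑ i, 16 * (∑ ℓ, σ ℓ * (J ℓ *ᵥ z) i) ^ 2
      = 16 * ((∑ ℓ, σ ℓ ^ 2) * (z ⬝ᵥ z)) := by
    rw [← Finset.mul_sum, clifford_sum J hJ z σ]
  rw [s1, s2, s3]; ring

/-- for the explicit solution f on the gauge ball,
(i) |∇_H f|^p = N^{2p/(p−1)}|z|^p/(Q+p)^{p/(p−1)} and (ii) the P-function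
P = |∇_H f|^p + (2p/((p−1)(Q+p))) f |z|^p equals c^p|z|^p pointwise, with
c = (R²/(Q+p))^{1/(p−1)} and Q = m+2k. -/
theorem P_function_identity_gauge_ball
    (hm : 1 ≤ m) (hk : 1 ≤ k)
    (J : Fin k → Matrix (Fin m) (Fin m) ℝ) (hJ : HType J)
    (p R : ℝ) (hp : 1 < p) (hR : 0 < R)
    (f : Pt m k → ℝ)
    (hf : ∀ x : Pt m k, f x =
      ((p - 1) / (2 * p * (((m : ℝ) + 2 * k + p) ^ (1 / (p - 1))))) *
        (R ^ (2 * p / (p - 1)) - gaugeN x ^ (2 * p / (p - 1))))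
    (x : Pt m k) (hx : x ≠ 0) :
    (hGradNorm J f x) ^ p =
      gaugeN x ^ (2 * p / (p - 1)) * ‖x.1‖ ^ p / (((m : ℝ) + 2 * k + p) ^ (p / (p - 1))) ∧
    (hGradNorm J f x) ^ p
        + (2 * p / ((p - 1) * ((m : ℝ) + 2 * k + p))) * f x * ‖x.1‖ ^ p =
      ((R ^ 2 / ((m : ℝ) + 2 * k + p)) ^ (1 / (p - 1))) ^ p * ‖x.1‖ ^ p := by
  have hp1 : (0:ℝ) < p - 1 := by linarith
  have hp0 : (0:ℝ) < p := by linarith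
  set Qp : ℝ := (m : ℝ) + 2 * k + p with hQpdef
  have hQp : 0 < Qp := by
    have h1 : (0:ℝ) ≤ (m:ℝ) := Nat.cast_nonneg m
    have h2 : (0:ℝ) ≤ (k:ℝ) := Nat.cast_nonneg k
    rw [hQpdef]; linarith
  have hQe : (0:ℝ) < Qp ^ ((1:ℝ)/(p-1)) := Real.rpow_pos_of_pos hQp _
  set β : ℝ := p / (2*(p-1)) with hβdef
  set c1 : ℝ := (p - 1) / (2 * p * (Qp ^ ((1:ℝ)/(p-1)))) with hc1def
  set U : ℝ := ‖x.1‖^2 * ‖x.1‖^2 + 16*‖x.2‖^2 with hUdef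
  have hU0 : 0 < U := by
    rcases (Prod.ext_iff.not.mp hx) with h
    have h1 : 0 ≤ ‖x.1‖^2 * ‖x.1‖^2 := by positivity
    have h2 : 0 ≤ 16*‖x.2‖^2 := by positivity
    rcases eq_or_lt_of_le h1 with h1' | h1'
    · rcases eq_or_lt_of_le h2 with h2' | h2'
      · exfalso
        apply hx
        have hz1 : ‖x.1‖ = 0 := by
          have h := mul_self_eq_zero.mp h1'.symm
          exact pow_eq_zero_iff (n := 2) (by norm_num) |>.mp h
        have hz2 : ‖x.2‖ = 0 := by
          have h : ‖x.2‖^2 = 0 := by linarith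
          exact pow_eq_zero_iff (n := 2) (by norm_num) |>.mp h
        have : x.1 = 0 := norm_eq_zero.mp hz1
        have h2'' : x.2 = 0 := norm_eq_zero.mp hz2
        exact Prod.ext this h2''
      · rw [hUdef]; linarith
    · rw [hUdef]; linarith
  -- rewrite f
  have hquarter : ∀ y : Pt m k, gaugeN y ^ (2*p/(p-1))
      = (‖y.1‖^2 * ‖y.1‖^2 + 16*‖y.2‖^2) ^ β := by
    intro y
    have hy : (0:ℝ) ≤ ‖y.1‖^4 + 16*‖y.2‖^2 := by positivity
    have h4 : ‖y.1‖^4 + 16*‖y.2‖^2 = ‖y.1‖^2*‖y.1‖^2 + 16*‖y.2‖^2 := by ring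
    rw [gaugeN, ← Real.rpow_mul hy, h4]
    congr 1
    rw [hβdef]; field_simp; ring
  have hfeq : f = fun y : Pt m k =>
      c1 * R ^ (2*p/(p-1)) - c1 * ((‖y.1‖^2 * ‖y.1‖^2 + 16*‖y.2‖^2) ^ β) := by
    funext y
    rw [hf y, hquarter y]
    ring
  -- derivative computations
  have hF : HasFDerivAt (fun y : Pt m k =>
      c1 * R ^ (2*p/(p-1)) - c1 * ((‖y.1‖^2 * ‖y.1‖^2 + 16*‖y.2‖^2) ^ β)) _ x :=
    (((Real.hasDerivAt_rpow_const (p := β) (Or.inl hU0.ne')).comp_hasFDerivAt x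
      (((hasFDerivAt_fst (p := x)).norm_sq.mul (hasFDerivAt_fst (p := x)).norm_sq).add
        ((hasFDerivAt_snd (p := x)).norm_sq.const_mul 16))).const_mul c1).const_sub
      (c1 * R ^ (2*p/(p-1)))
  have hdz : ∀ i : Fin m, fderiv ℝ f x (EuclideanSpace.single i 1, 0)
      = -(c1 * (β * U ^ (β-1)) * (4 * ‖x.1‖^2 * x.1 i)) := by
    intro i
    rw [hfeq, hF.fderiv]
    simp [EuclideanSpace.inner_single_right, real_inner_comm]
    ring
  have hds : ∀ ℓ : Fin k, fderiv ℝ f x (0, EuclideanSpace.single ℓ 1)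
      = -(c1 * (β * U ^ (β-1)) * (32 * x.2 ℓ)) := by
    intro ℓ
    rw [hfeq, hF.fderiv]
    simp [EuclideanSpace.inner_single_right, real_inner_comm]
    ring
  -- horizontal derivative
  have hXD : ∀ i : Fin m, XD J f i x
      = -(c1*(β*U^(β-1))) * (4 * (‖x.1‖^2 * x.1 i)
          + 16 * ∑ ℓ, (∑ j, J ℓ i j * x.1 j) * x.2 ℓ) := by
    intro i
    unfold XD
    rw [hdz i]
    have hterm : ∀ ℓ : Fin k, (∑ j, J ℓ i j * x.1 j) * fderiv ℝ f x (0, EuclideanSpace.single ℓ 1)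
        = -(c1*(β*U^(β-1))) * 32 * ((∑ j, J ℓ i j * x.1 j) * x.2 ℓ) := by
      intro ℓ; rw [hds ℓ]; ring
    simp only [hterm]
    rw [← Finset.mul_sum]
    ring
  -- gradient square
  have hGS : hGradSq J f x = 16*(c1*(β*U^(β-1)))^2 * (U * ‖x.1‖^2) := by
    have hz2 : ((fun j => x.1 j) ⬝ᵥ (fun j => x.1 j) : ℝ) = ‖x.1‖^2 := by
      rw [EuclideanSpace.norm_eq, Real.sq_sqrt (Finset.sum_nonneg fun i _ => by positivity)]
      simp [dotProduct, Real.norm_eq_abs, sq_abs, sq]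
    have hs2 : (∑ ℓ, (x.2 ℓ) ^ 2) = ‖x.2‖^2 := by
      rw [EuclideanSpace.norm_eq, Real.sq_sqrt (Finset.sum_nonneg fun i _ => by positivity)]
      simp [Real.norm_eq_abs, sq_abs]
    have hkk := key_sum J hJ (fun j => x.1 j) (fun ℓ => x.2 ℓ)
    rw [hz2] at hkk
    unfold hGradSq
    calc ∑ i, XD J f i x ^ 2
        = ∑ i, 16*(c1*(β*U^(β-1)))^2 *
            (‖x.1‖^2 * x.1 i + 4 * ∑ ℓ, (J ℓ *ᵥ (fun j => x.1 j)) i * x.2 ℓ)^2 := by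
          refine Finset.sum_congr rfl fun i _ => ?_
          rw [hXD i]
          have hmv : ∀ ℓ : Fin k, (J ℓ *ᵥ (fun j => x.1 j)) i = ∑ j, J ℓ i j * x.1 j :=
            fun ℓ => rfl
          simp only [hmv]
          ring
      _ = 16*(c1*(β*U^(β-1)))^2 * ((((‖x.1‖^2))^2 + 16 * ∑ ℓ, (x.2 ℓ)^2) * ‖x.1‖^2) := by
          rw [← Finset.mul_sum, hkk]
      _ = 16*(c1*(β*U^(β-1)))^2 * (U * ‖x.1‖^2) := by
          rw [hs2, hUdef]; ring
  -- positivity facts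
  have hc1pos : 0 < c1 := by rw [hc1def]; positivity
  have hβpos : 0 < β := by rw [hβdef]; positivity
  have hUb : 0 < U^(β-1) := Real.rpow_pos_of_pos hU0 _
  have hκpos : 0 < c1*(β*U^(β-1)) := mul_pos hc1pos (mul_pos hβpos hUb)
  -- gradient norm
  have hGN : hGradNorm J f x = 4*(c1*(β*U^(β-1))) * Real.sqrt U * ‖x.1‖ := by
    unfold hGradNorm
    rw [hGS]
    have h0 : (0:ℝ) ≤ 4*(c1*(β*U^(β-1))) * Real.sqrt U * ‖x.1‖ :=
      mul_nonneg (mul_nonneg (by linarith) (Real.sqrt_nonneg U)) (norm_nonneg _)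
    have hsq : 16*(c1*(β*U^(β-1)))^2 * (U*‖x.1‖^2)
        = (4*(c1*(β*U^(β-1))) * Real.sqrt U * ‖x.1‖)^2 := by
      have h := Real.sq_sqrt hU0.le
      linear_combination (-(16*(c1*(β*U^(β-1)))^2*‖x.1‖^2)) * h
    rw [hsq, Real.sqrt_sq h0]
  have h4κ : 4*(c1*(β*U^(β-1))) = U^(β-1) / Qp^((1:ℝ)/(p-1)) := by
    rw [hc1def, hβdef]
    field_simp
    ring
  have hGNval : hGradNorm J f x = U^(β - 1/2) * ‖x.1‖ / Qp^((1:ℝ)/(p-1)) := by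
    rw [hGN, h4κ, Real.sqrt_eq_rpow]
    have hexp : U^(β-1) * U^((1:ℝ)/2) = U^(β - 1/2) := by
      rw [← Real.rpow_add hU0]; congr 1; ring
    calc U^(β-1) / Qp^((1:ℝ)/(p-1)) * U^((1:ℝ)/2) * ‖x.1‖
        = (U^(β-1) * U^((1:ℝ)/2)) * ‖x.1‖ / Qp^((1:ℝ)/(p-1)) := by ring
      _ = U^(β - 1/2) * ‖x.1‖ / Qp^((1:ℝ)/(p-1)) := by rw [hexp]
  have hiU : hGradNorm J f x ^ p = U^β * ‖x.1‖^p / Qp^(p/(p-1)) := by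
    rw [hGNval]
    rw [Real.div_rpow (by positivity) hQe.le]
    rw [Real.mul_rpow (by positivity) (norm_nonneg _)]
    rw [← Real.rpow_mul hU0.le, ← Real.rpow_mul hQp.le]
    rw [show (β - 1/2)*p = β by rw [hβdef]; field_simp; ring]
    rw [show (1:ℝ)/(p-1)*p = p/(p-1) by field_simp]
  constructor
  · rw [hquarter x, ← hUdef]
    exact hiU
  · rw [hiU, hf x, hquarter x, ← hUdef]
    have hR2 : ((R^2/Qp) ^ ((1:ℝ)/(p-1)))^p = R^(2*p/(p-1)) / Qp^(p/(p-1)) := by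
      rw [← Real.rpow_mul (div_nonneg (by positivity) hQp.le)]
      rw [Real.div_rpow (by positivity) hQp.le]
      rw [show ((1:ℝ)/(p-1)*p) = p/(p-1) by field_simp]
      rw [← Real.rpow_natCast R 2, ← Real.rpow_mul hR.le]
      rw [show ((2:ℕ):ℝ) * (p/(p-1)) = 2*p/(p-1) by push_cast; ring]
    rw [show (1:ℝ)/(p-1) = (1:ℝ)/(p-1) from rfl, hR2]
    have hsplit : Qp^(p/(p-1)) = Qp * Qp^((1:ℝ)/(p-1)) := by
      nth_rewrite 2 [← Real.rpow_one Qp]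
      rw [← Real.rpow_add hQp]
      congr 1; field_simp; ring
    rw [hc1def, hsplit]
    have hQe' : Qp^((1:ℝ)/(p-1)) ≠ 0 := hQe.ne'
    field_simp
    ring

end
end
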